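/- Let N be a natural number and p, λ, β real numbers with 1 < p < N, λ > 0, β > 0. Let φ, g : ℝ → ℝ with φ continuously differentiable on [1,∞), φ(r) > 0 for all r ≥ 1, g continuous on [1,∞) with g(r) > 0 for all r ≥ 1, F satisfying the radial eigenvalue ODE on (1,∞), the Robin condition φ'(1) = β^(1/(p−1))·φ(1), and r_* > 1 with φ'(r_*) = 0. Set K := 1 + ((p−1)/(N−p))·β^(1/(p−1)). Then for every real M > 0 such that g(s) ≤ M for all s ∈ [1, r_*], one has r_*^N ≥ 1 + N·β/(λ·M·K^(p−1)). -/

import Mathlib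

open Real Set

/-- The radial quantity `F(r) = r^(N-1) |φ'(r)|^(p-2) φ'(r)`, written with
real exponents via the sign function. -/
noncomputable def radialF (N : ℕ) (p : ℝ) (φ : ℝ → ℝ) (r : ℝ) : ℝ :=
  r ^ ((N : ℝ) - 1) * Real.sign (deriv φ r) * |deriv φ r| ^ (p - 1)

private lemma habs_cont {p : ℝ} (hp : 1 < p) :
    Continuous (fun x : ℝ => |x| ^ (p - 1)) :=
  continuous_abs.rpow_const (fun _ => Or.inr (by linarith))

private lemma hsign_cont {p : ℝ} (hp : 1 < p) :
    Continuous (fun x : ℝ => Real.sign x * |x| ^ (p - 1)) := by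
  rw [continuous_iff_continuousAt]
  intro x
  rcases lt_trichotomy x 0 with hx | hx | hx
  · have hev : ∀ᶠ y in nhds x, -( |y| ^ (p - 1)) = Real.sign y * |y| ^ (p - 1) := by
      filter_upwards [isOpen_Iio.eventually_mem (show x ∈ Iio (0:ℝ) from hx)] with y hy
      rw [Real.sign_of_neg hy]; ring
    exact ContinuousAt.congr ((habs_cont hp).continuousAt.neg) hev
  · subst hx
    have h0 : (fun y : ℝ => Real.sign y * |y| ^ (p - 1)) 0 = 0 := by
      simp [Real.sign_zero]
    unfold ContinuousAt
    rw [h0]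
    apply squeeze_zero_norm (a := fun y : ℝ => |y| ^ (p - 1))
    · intro y
      have h1 : |Real.sign y| ≤ 1 := by
        rcases lt_trichotomy y 0 with h | h | h
        · rw [Real.sign_of_neg h]; simp
        · subst h; simp [Real.sign_zero]
        · rw [Real.sign_of_pos h]; simp
      have h2 : (0:ℝ) ≤ |y| ^ (p - 1) := Real.rpow_nonneg (abs_nonneg _) _
      calc ‖Real.sign y * |y| ^ (p - 1)‖ = |Real.sign y| * |(|y| ^ (p - 1))| := abs_mul _ _
        _ = |Real.sign y| * |y| ^ (p - 1) := by rw [abs_of_nonneg h2]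
        _ ≤ 1 * |y| ^ (p - 1) := mul_le_mul_of_nonneg_right h1 h2
        _ = |y| ^ (p - 1) := one_mul _
    · have := (habs_cont hp).tendsto 0
      simpa [Real.zero_rpow (show p - 1 ≠ 0 by linarith)] using this
  · have hev : ∀ᶠ y in nhds x, |y| ^ (p - 1) = Real.sign y * |y| ^ (p - 1) := by
      filter_upwards [isOpen_Ioi.eventually_mem (show x ∈ Ioi (0:ℝ) from hx)] with y hy
      rw [Real.sign_of_pos hy]; ring
    exact ContinuousAt.congr (habs_cont hp).continuousAt hev

/-- Lower bound on the critical radius `r_*` in Theorem 1.4(b):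
`r_*^N ≥ 1 + Nβ/(λ M K^(p-1))` whenever `g ≤ M` on `[1, r_*]`, where
`K = 1 + ((p-1)/(N-p)) β^(1/(p-1))`. -/
theorem critical_radius_lower (N : ℕ) (p lam β : ℝ)
    (hp : 1 < p) (hpN : p < N) (hlam : 0 < lam) (hβ : 0 < β)
    (φ g : ℝ → ℝ)
    (hφdiff : ∀ r ≥ (1 : ℝ), DifferentiableAt ℝ φ r)
    (hφC1 : ContinuousOn (deriv φ) (Set.Ici 1))
    (hφpos : ∀ r ≥ (1 : ℝ), 0 < φ r)
    (hgcont : ContinuousOn g (Set.Ici 1))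
    (hgpos : ∀ r ≥ (1 : ℝ), 0 < g r)
    (hODE : ∀ r > (1 : ℝ),
      HasDerivAt (radialF N p φ) (-(lam * r ^ ((N : ℝ) - 1) * g r * φ r ^ (p - 1))) r)
    (hRobin : deriv φ 1 = β ^ (1 / (p - 1)) * φ 1)
    (rstar : ℝ) (hrstar : 1 < rstar) (hcrit : deriv φ rstar = 0) :
    ∀ M > (0 : ℝ), (∀ s ∈ Set.Icc (1 : ℝ) rstar, g s ≤ M) →
      1 + (N : ℝ) * β /
          (lam * M * (1 + ((p - 1) / ((N : ℝ) - p)) * β ^ (1 / (p - 1))) ^ (p - 1)) ≤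
        rstar ^ (N : ℝ) := by
  intro M hM hgM
  have hp1 : (0:ℝ) < p - 1 := by linarith
  have hNp : (0:ℝ) < (N:ℝ) - p := by linarith
  have hN1 : (1:ℝ) < N := lt_trans hp hpN
  set b : ℝ := β ^ (1 / (p - 1)) with hb_def
  have hb : 0 < b := Real.rpow_pos_of_pos hβ _
  have hφ1 : 0 < φ 1 := hφpos 1 le_rfl
  set K : ℝ := 1 + ((p - 1) / ((N : ℝ) - p)) * b with hK_def
  have hK : 0 < K := by
    have h1 : 0 < ((p - 1) / ((N : ℝ) - p)) * b :=
      mul_pos (div_pos hp1 hNp) hb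
    rw [hK_def]
    linarith
  set α : ℝ := ((N:ℝ) - 1) / (p - 1) with hα_def
  have hα1 : 1 < α := by
    rw [hα_def, lt_div_iff₀ hp1]; linarith
  -- continuity of F on Ici 1
  have hFeq : ∀ r : ℝ, radialF N p φ r
      = r ^ ((N:ℝ) - 1) * (Real.sign (deriv φ r) * |deriv φ r| ^ (p - 1)) := by
    intro r; rw [radialF, mul_assoc]
  have hr_cont : ContinuousOn (fun r : ℝ => r ^ ((N:ℝ) - 1)) (Ici 1) :=
    ContinuousOn.rpow_const continuousOn_id
      (fun x hx => Or.inl (ne_of_gt (lt_of_lt_of_le one_pos hx)))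
  have hFcont : ContinuousOn (radialF N p φ) (Ici 1) := by
    have h2 : ContinuousOn (fun r => Real.sign (deriv φ r) * |deriv φ r| ^ (p - 1)) (Ici 1) :=
      (hsign_cont hp).comp_continuousOn hφC1
    have := hr_cont.mul h2
    apply this.congr
    intro r _; exact hFeq r
  -- F is antitone on Ici 1
  have hFanti : AntitoneOn (radialF N p φ) (Ici 1) := by
    apply antitoneOn_of_deriv_nonpos (convex_Ici 1) hFcont
    · rw [interior_Ici]
      exact fun x hx => (hODE x hx).differentiableAt.differentiableWithinAt
    · rw [interior_Ici]
      intro x hx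
      rw [(hODE x hx).deriv]
      have h1 : (0:ℝ) < x := lt_trans one_pos hx
      have : 0 < lam * x ^ ((N:ℝ) - 1) * g x * φ x ^ (p - 1) := by
        apply mul_pos (mul_pos (mul_pos hlam (Real.rpow_pos_of_pos h1 _))
          (hgpos x hx.le)) (Real.rpow_pos_of_pos (hφpos x hx.le) _)
      linarith
  -- value of F at 1
  have hφ'1 : deriv φ 1 = b * φ 1 := hRobin
  have hbφ1 : 0 < b * φ 1 := mul_pos hb hφ1
  have hF1 : radialF N p φ 1 = (b * φ 1) ^ (p - 1) := by
    rw [radialF, hφ'1, Real.sign_of_pos hbφ1, abs_of_pos hbφ1, Real.one_rpow]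
    ring
  have hFstar : radialF N p φ rstar = 0 := by
    rw [radialF, hcrit, Real.sign_zero]; ring
  -- Step B: pointwise bound on deriv φ
  have hB : ∀ r ≥ (1:ℝ), deriv φ r ≤ b * φ 1 * r ^ (-α) := by
    intro r hr
    have hr0 : (0:ℝ) < r := lt_of_lt_of_le one_pos hr
    have hFle : radialF N p φ r ≤ (b * φ 1) ^ (p - 1) := by
      rw [← hF1]
      exact hFanti self_mem_Ici hr hr
    have hRHSpos : 0 < b * φ 1 * r ^ (-α) :=
      mul_pos hbφ1 (Real.rpow_pos_of_pos hr0 _)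
    rcases le_or_gt (deriv φ r) 0 with hd | hd
    · linarith
    · rw [hFeq, Real.sign_of_pos hd, abs_of_pos hd, one_mul] at hFle
      have hkey : deriv φ r ^ (p - 1) ≤ (b * φ 1 * r ^ (-α)) ^ (p - 1) := by
        have hrpow : (0:ℝ) < r ^ ((N:ℝ) - 1) := Real.rpow_pos_of_pos hr0 _
        have h1 : deriv φ r ^ (p - 1) ≤ (b * φ 1) ^ (p - 1) / r ^ ((N:ℝ) - 1) := by
          rw [le_div_iff₀ hrpow]
          calc deriv φ r ^ (p - 1) * r ^ ((N:ℝ) - 1)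
              = r ^ ((N:ℝ) - 1) * deriv φ r ^ (p - 1) := by ring
            _ ≤ (b * φ 1) ^ (p - 1) := hFle
        have hαp : -α * (p - 1) = -(((N:ℝ) - 1)) := by
          rw [hα_def]; field_simp
        have h2 : (b * φ 1 * r ^ (-α)) ^ (p - 1)
            = (b * φ 1) ^ (p - 1) / r ^ ((N:ℝ) - 1) := by
          rw [Real.mul_rpow hbφ1.le (Real.rpow_nonneg hr0.le _),
            ← Real.rpow_mul hr0.le, hαp, Real.rpow_neg hr0.le, div_eq_mul_inv]
        rw [h2]; exact h1
      exact (Real.rpow_le_rpow_iff hd.le hRHSpos.le hp1).mp hkey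
  -- Step C: pointwise bound on φ
  set c : ℝ := b * φ 1 / (α - 1) with hc_def
  have hα1' : (0:ℝ) < α - 1 := by linarith
  have hc : 0 < c := div_pos hbφ1 hα1'
  set ψ : ℝ → ℝ := fun r => φ r + c * r ^ (1 - α) with hψ_def
  have hψderiv : ∀ r > (1:ℝ), HasDerivAt ψ (deriv φ r + c * ((1 - α) * r ^ (-α))) r := by
    intro r hr
    have hr0 : r ≠ 0 := by positivity
    have h1 : HasDerivAt (fun x : ℝ => x ^ (1 - α)) ((1 - α) * r ^ (1 - α - 1)) r :=
      Real.hasDerivAt_rpow_const (Or.inl hr0)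
    have h2 : (1 - α - 1 : ℝ) = -α := by ring
    rw [h2] at h1
    exact ((hφdiff r hr.le).hasDerivAt).add (h1.const_mul c)
  have hψanti : AntitoneOn ψ (Ici 1) := by
    apply antitoneOn_of_deriv_nonpos (convex_Ici 1)
    · apply ContinuousOn.add
      · exact fun r hr => ((hφdiff r hr).continuousAt).continuousWithinAt
      · exact continuousOn_const.mul (ContinuousOn.rpow_const continuousOn_id
          (fun x hx => Or.inl (ne_of_gt (lt_of_lt_of_le one_pos hx))))
    · rw [interior_Ici]
      exact fun x hx => (hψderiv x hx).differentiableAt.differentiableWithinAt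
    · rw [interior_Ici]
      intro x hx
      rw [(hψderiv x hx).deriv]
      have hx0 : (0:ℝ) < x := lt_trans one_pos hx
      have h1 : c * ((1 - α) * x ^ (-α)) = -(b * φ 1 * x ^ (-α)) := by
        rw [hc_def]; field_simp; ring
      rw [h1]
      have h2 := hB x hx.le
      linarith
  have hC : ∀ r ∈ Icc (1:ℝ) rstar, φ r ≤ K * φ 1 := by
    intro r hr
    have hr0 : (0:ℝ) < r := lt_of_lt_of_le one_pos hr.1
    have h1 : ψ r ≤ ψ 1 := hψanti self_mem_Ici hr.1 hr.1
    have h2 : 0 < c * r ^ (1 - α) := mul_pos hc (Real.rpow_pos_of_pos hr0 _)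
    have h3 : ψ 1 = φ 1 + c := by
      rw [hψ_def]; simp [Real.one_rpow]
    have h4 : φ r ≤ φ 1 + c := by
      have : φ r + c * r ^ (1 - α) ≤ φ 1 + c := by rw [← h3]; exact h1
      linarith
    have h5 : φ 1 + c = K * φ 1 := by
      rw [hc_def, hK_def, hα_def]
      have hNp' : (N:ℝ) - p ≠ 0 := hNp.ne'
      field_simp
      rw [show (N:ℝ) - 1 - (p - 1) = N - p by ring, add_mul, one_mul, div_mul_cancel₀ _ hNp']
    linarith [h5 ▸ h4]
  -- Step D: main comparison
  set C : ℝ := lam * M * (K * φ 1) ^ (p - 1) with hC_def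
  have hCpos : 0 < C :=
    mul_pos (mul_pos hlam hM) (Real.rpow_pos_of_pos (mul_pos hK hφ1) _)
  have hNpos : (0:ℝ) < (N:ℝ) := by linarith
  set H : ℝ → ℝ := fun r => radialF N p φ r + C / N * r ^ ((N:ℝ)) with hH_def
  have hHderiv : ∀ r ∈ Ioo (1:ℝ) rstar,
      HasDerivAt H (-(lam * r ^ ((N:ℝ) - 1) * g r * φ r ^ (p - 1))
        + C / N * ((N:ℝ) * r ^ ((N:ℝ) - 1))) r := by
    intro r hr
    have hr0 : r ≠ 0 := by
      have : (0:ℝ) < r := lt_trans one_pos hr.1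
      positivity
    exact (hODE r hr.1).add
      ((Real.hasDerivAt_rpow_const (Or.inl hr0)).const_mul (C / N))
  have hHmono : MonotoneOn H (Icc 1 rstar) := by
    apply monotoneOn_of_deriv_nonneg (convex_Icc 1 rstar)
    · apply ContinuousOn.add (hFcont.mono Icc_subset_Ici_self)
      exact continuousOn_const.mul (ContinuousOn.rpow_const continuousOn_id
        (fun x hx => Or.inl (ne_of_gt (lt_of_lt_of_le one_pos hx.1))))
    · rw [interior_Icc]
      exact fun x hx => (hHderiv x hx).differentiableAt.differentiableWithinAt
    · rw [interior_Icc]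
      intro x hx
      rw [(hHderiv x hx).deriv]
      have hx0 : (0:ℝ) < x := lt_trans one_pos hx.1
      have hxpow : (0:ℝ) < x ^ ((N:ℝ) - 1) := Real.rpow_pos_of_pos hx0 _
      have hxIcc : x ∈ Icc (1:ℝ) rstar := ⟨hx.1.le, hx.2.le⟩
      have hg : g x ≤ M := hgM x hxIcc
      have hφx : φ x ^ (p - 1) ≤ (K * φ 1) ^ (p - 1) :=
        Real.rpow_le_rpow (hφpos x hx.1.le).le (hC x hxIcc) hp1.le
      have hprod : lam * g x * φ x ^ (p - 1) ≤ lam * M * (K * φ 1) ^ (p - 1) := by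
        apply mul_le_mul
        · exact mul_le_mul_of_nonneg_left hg hlam.le
        · exact hφx
        · exact (Real.rpow_pos_of_pos (hφpos x hx.1.le) _).le
        · exact (mul_pos hlam hM).le
      have hCN : C / N * ((N:ℝ) * x ^ ((N:ℝ) - 1)) = C * x ^ ((N:ℝ) - 1) := by
        field_simp
      rw [hCN]
      have h1 : lam * x ^ ((N:ℝ) - 1) * g x * φ x ^ (p - 1)
          ≤ C * x ^ ((N:ℝ) - 1) := by
        calc lam * x ^ ((N:ℝ) - 1) * g x * φ x ^ (p - 1)
            = (lam * g x * φ x ^ (p - 1)) * x ^ ((N:ℝ) - 1) := by ring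
          _ ≤ (lam * M * (K * φ 1) ^ (p - 1)) * x ^ ((N:ℝ) - 1) :=
              mul_le_mul_of_nonneg_right hprod hxpow.le
          _ = C * x ^ ((N:ℝ) - 1) := by rw [hC_def]
      linarith
  -- combine
  have hHle : H 1 ≤ H rstar :=
    hHmono (left_mem_Icc.mpr hrstar.le) (right_mem_Icc.mpr hrstar.le) hrstar.le
  have hF1β : radialF N p φ 1 = β * φ 1 ^ (p - 1) := by
    rw [hF1, Real.mul_rpow hb.le hφ1.le, hb_def, ← Real.rpow_mul hβ.le]
    rw [one_div_mul_cancel (by linarith : p - 1 ≠ 0), Real.rpow_one]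
  have hKφ : (K * φ 1) ^ (p - 1) = K ^ (p - 1) * φ 1 ^ (p - 1) :=
    Real.mul_rpow hK.le hφ1.le
  set D : ℝ := lam * M * K ^ (p - 1) with hD_def
  have hDpos : 0 < D := mul_pos (mul_pos hlam hM) (Real.rpow_pos_of_pos hK _)
  have hCD : C = D * φ 1 ^ (p - 1) := by
    rw [hC_def, hKφ, hD_def]; ring
  have hstep : β * φ 1 ^ (p - 1) + D * φ 1 ^ (p - 1) / N
      ≤ D * φ 1 ^ (p - 1) / N * rstar ^ ((N:ℝ)) := by
    have := hHle
    rw [hH_def] at this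
    simp only at this
    rw [hF1β, hFstar, Real.one_rpow, hCD] at this
    linarith
  have hφ1p : 0 < φ 1 ^ (p - 1) := Real.rpow_pos_of_pos hφ1 _
  have hstep2 : β + D / N ≤ D / N * rstar ^ ((N:ℝ)) := by
    have h : (β + D / N) * φ 1 ^ (p - 1)
        ≤ (D / N * rstar ^ ((N:ℝ))) * φ 1 ^ (p - 1) := by
      calc (β + D / N) * φ 1 ^ (p - 1)
          = β * φ 1 ^ (p - 1) + D * φ 1 ^ (p - 1) / N := by ring
        _ ≤ D * φ 1 ^ (p - 1) / N * rstar ^ ((N:ℝ)) := hstep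
        _ = (D / N * rstar ^ ((N:ℝ))) * φ 1 ^ (p - 1) := by ring
    exact le_of_mul_le_mul_right h hφ1p
  have hDN : 0 < D / N := div_pos hDpos hNpos
  have hfin : (β + D / N) / (D / N) ≤ rstar ^ ((N:ℝ)) :=
    (div_le_iff₀ hDN).mpr (by linarith)
  have heq : (β + D / N) / (D / N) = 1 + (N:ℝ) * β / D := by
    field_simp
    ring
  rw [heq] at hfin
  convert hfin using 2
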